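/- For the state ρ(n,p) = (1-p)|W_n⟩⟨W_n| + p|0^{⊗n}⟩⟨0^{⊗n}| with all n parties measuring Pauli Z as setting 1 and Pauli X as setting 2, the symmetrized correlator S^o_r (summed over all n! orderings, where o parties measure nontrivially and r of them use setting 1) equals (1-p)P^o_r + pQ^o_r with Q^o_r = n!·δ_{o,r} and P^o_r = (n-1)!·((n-2r)δ_{o,r} + 2δ_{o,r+2}). -/
import Mathlib

open Matrix

noncomputable def Wvec (n : ℕ) : (Fin n → Fin 2) → ℂ := fun x =>
  if (Finset.univ.filter fun i => x i = 1).card = 1 then ((Real.sqrt n)⁻¹ : ℝ) else 0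

def outer {ι : Type*} (v : ι → ℂ) : Matrix ι ι ℂ :=
  Matrix.of fun x y => v x * star (v y)

def vac (n : ℕ) : (Fin n → Fin 2) → ℂ := fun x =>
  if x = (fun _ => 0) then 1 else 0

def tensOp {m d : ℕ} (M : Fin m → Matrix (Fin d) (Fin d) ℂ) :
    Matrix (Fin m → Fin d) (Fin m → Fin d) ℂ :=
  Matrix.of fun x y => ∏ l, M l (x l) (y l)

/-- Pauli `Z`. -/
def Zp : Matrix (Fin 2) (Fin 2) ℂ := !![1, 0; 0, -1]

/-- Pauli `X`. -/
def Xp : Matrix (Fin 2) (Fin 2) ℂ := !![0, 1; 1, 0]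

/-- The three measurement choices: `M_0 = I`, `M_1 = Z`, `M_2 = X`. -/
def Mset : Fin 3 → Matrix (Fin 2) (Fin 2) ℂ := ![1, Zp, Xp]

section Aux

-- entry lemmas
lemma M00 (k : Fin 3) : Mset k 0 0 = if k = 2 then 0 else 1 := by
  fin_cases k <;> simp [Mset, Zp, Xp, Matrix.one_apply]
lemma M11 (k : Fin 3) : Mset k 1 1 = if k = 0 then 1 else if k = 1 then -1 else 0 := by
  fin_cases k <;> simp [Mset, Zp, Xp, Matrix.one_apply]
lemma M10 (k : Fin 3) : Mset k 1 0 = if k = 2 then 1 else 0 := by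
  fin_cases k <;> simp [Mset, Zp, Xp, Matrix.one_apply]
lemma M01 (k : Fin 3) : Mset k 0 1 = if k = 2 then 1 else 0 := by
  fin_cases k <;> simp [Mset, Zp, Xp, Matrix.one_apply]

lemma M11' (k : Fin 3) (h : k ≠ 2) : Mset k 1 1 = if k = 1 then -1 else 1 := by
  fin_cases k <;> simp_all [M11]

lemma M11_two : Mset 2 1 1 = 0 := by simp [M11]

lemma trace_outer_mul {ι : Type*} [Fintype ι] [DecidableEq ι] (v : ι → ℂ) (A : Matrix ι ι ℂ) :
    (outer v * A).trace = ∑ x, ∑ y, v x * star (v y) * A y x := by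
  simp [Matrix.trace, Matrix.diag, Matrix.mul_apply, outer]

lemma trace_outer_vac {n : ℕ} (M : Fin n → Matrix (Fin 2) (Fin 2) ℂ) :
    (outer (vac n) * tensOp M).trace = ∏ l, M l 0 0 := by
  rw [trace_outer_mul]
  simp only [vac, apply_ite (star : ℂ → ℂ), star_one, star_zero, ite_mul, one_mul, zero_mul,
    mul_ite, mul_one, mul_zero]
  rw [Finset.sum_eq_single (fun _ => (0 : Fin 2))]
  · simp [tensOp]
  · intro x _ hx
    simp [hx]
  · simp

def ebasis (n : ℕ) (i : Fin n) : Fin n → Fin 2 := fun l => if l = i then 1 else 0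

lemma filter_ebasis {n : ℕ} (i : Fin n) :
    (Finset.univ.filter fun l => ebasis n i l = 1) = {i} := by
  ext l; simp [ebasis]

lemma ebasis_inj {n : ℕ} : Function.Injective (ebasis n) := by
  intro i j h
  by_contra hc
  have := congrFun h i
  simp [ebasis, hc] at this

lemma filter_one_eq_image {n : ℕ} :
    (Finset.univ.filter fun x : Fin n → Fin 2 => (Finset.univ.filter fun i => x i = 1).card = 1)
      = Finset.univ.image (ebasis n) := by
  ext x
  simp only [Finset.mem_filter, Finset.mem_univ, true_and, Finset.mem_image]
  constructor
  · intro h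
    obtain ⟨a, ha⟩ := Finset.card_eq_one.mp h
    refine ⟨a, ?_⟩
    funext l
    have hmem : ∀ l : Fin n, x l = 1 ↔ l = a := by
      intro l
      constructor
      · intro hl
        have : l ∈ (Finset.univ.filter fun i => x i = 1) := by simp [hl]
        rw [ha] at this; simpa using this
      · intro hl
        have : a ∈ (Finset.univ.filter fun i => x i = 1) := by rw [ha]; simp
        simp at this; rw [hl]; exact this
    by_cases hla : l = a
    · simp [ebasis, hla, ((hmem l).mpr hla).symm]
    · have : x l ≠ 1 := fun hc => hla ((hmem l).mp hc)
      have hx0 : x l = 0 := by omega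
      simp [ebasis, hla, hx0]
  · rintro ⟨a, rfl⟩
    rw [filter_ebasis]; simp

lemma star_Wvec {n : ℕ} (x : Fin n → Fin 2) : star (Wvec n x) = Wvec n x := by
  unfold Wvec; split <;> simp [Complex.conj_ofReal]

lemma sum_Wvec_mul {n : ℕ} (g : (Fin n → Fin 2) → ℂ) :
    ∑ x, Wvec n x * g x = (((Real.sqrt n)⁻¹ : ℝ) : ℂ) * ∑ i, g (ebasis n i) := by
  unfold Wvec
  simp only [ite_mul, zero_mul]
  rw [← Finset.sum_filter, filter_one_eq_image,
    Finset.sum_image (fun a _ b _ h => ebasis_inj h), Finset.mul_sum]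

lemma trace_outer_W {n : ℕ} (M : Fin n → Matrix (Fin 2) (Fin 2) ℂ) :
    (outer (Wvec n) * tensOp M).trace =
      (n : ℂ)⁻¹ * ∑ i, ∑ j, ∏ l, M l (ebasis n j l) (ebasis n i l) := by
  rw [trace_outer_mul]
  have key : ∀ x, (∑ y, Wvec n x * star (Wvec n y) * tensOp M y x)
      = Wvec n x * ((((Real.sqrt n)⁻¹ : ℝ) : ℂ) * ∑ j, tensOp M (ebasis n j) x) := by
    intro x
    rw [← sum_Wvec_mul fun y => tensOp M y x, Finset.mul_sum]
    exact Finset.sum_congr rfl fun y _ => by rw [star_Wvec]; ring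
  simp_rw [key]
  rw [sum_Wvec_mul fun x => (((Real.sqrt n)⁻¹ : ℝ) : ℂ) * ∑ j, tensOp M (ebasis n j) x]
  rw [← Finset.mul_sum, ← mul_assoc]
  congr 1
  rw [← Complex.ofReal_mul, ← mul_inv, Real.mul_self_sqrt (Nat.cast_nonneg n)]
  push_cast
  ring

/-- entry product -/
noncomputable def Pent {n : ℕ} (f : Fin n → Fin 3) (i j : Fin n) : ℂ :=
  ∏ l, Mset (f l) (ebasis n j l) (ebasis n i l)

lemma prod_M00 {n : ℕ} (f : Fin n → Fin 3) (s : Finset (Fin n)) :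
    ∏ l ∈ s, Mset (f l) 0 0 = if ∀ l ∈ s, f l ≠ 2 then 1 else 0 := by
  split
  · next h => exact Finset.prod_eq_one fun l hl => by rw [M00, if_neg (h l hl)]
  · next h =>
    push_neg at h
    obtain ⟨l, hl, h2⟩ := h
    exact Finset.prod_eq_zero hl (by rw [M00, if_pos h2])

lemma Pent_diag {n : ℕ} (f : Fin n → Fin 3) (i : Fin n) :
    Pent f i i = Mset (f i) 1 1 *
      (if ∀ l ∈ Finset.univ.erase i, f l ≠ 2 then 1 else 0) := by
  rw [Pent, ← Finset.mul_prod_erase Finset.univ _ (Finset.mem_univ i), ← prod_M00]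
  congr 1
  · simp [ebasis]
  · refine Finset.prod_congr rfl fun l hl => ?_
    have : l ≠ i := Finset.ne_of_mem_erase hl
    simp [ebasis, this]

lemma Pent_off {n : ℕ} (f : Fin n → Fin 3) (i j : Fin n) (hij : i ≠ j) :
    Pent f i j = (if f j = 2 then 1 else 0) * ((if f i = 2 then 1 else 0) *
      (if ∀ l ∈ (Finset.univ.erase j).erase i, f l ≠ 2 then 1 else 0)) := by
  rw [Pent, ← Finset.mul_prod_erase Finset.univ _ (Finset.mem_univ j),
    ← Finset.mul_prod_erase _ _ (Finset.mem_erase.mpr ⟨hij, Finset.mem_univ i⟩), ← prod_M00]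
  congr 1
  · rw [← M10]; simp [ebasis, hij.symm]
  congr 1
  · rw [← M01]; simp [ebasis, hij]
  · refine Finset.prod_congr rfl fun l hl => ?_
    simp only [Finset.mem_erase] at hl
    simp [ebasis, hl.1, hl.2.1]

lemma sum_Pent_empty {n : ℕ} (f : Fin n → Fin 3) (hf : ∀ l, f l ≠ 2) :
    ∑ i, ∑ j, Pent f i j = ∑ i, (if f i = 1 then (-1 : ℂ) else 1) := by
  refine Finset.sum_congr rfl fun i _ => ?_
  rw [← Finset.add_sum_erase Finset.univ _ (Finset.mem_univ i)]
  rw [Pent_diag, if_pos (fun l _ => hf l), mul_one, M11' _ (hf i)]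
  rw [Finset.sum_eq_zero fun j hj => by
    rw [Pent_off f i j (Finset.ne_of_mem_erase hj).symm, if_neg (hf j), zero_mul]]
  ring

lemma sum_Pent_single {n : ℕ} (f : Fin n → Fin 3) (a : Fin n)
    (hf : ∀ l, f l = 2 ↔ l = a) : ∑ i, ∑ j, Pent f i j = 0 := by
  refine Finset.sum_eq_zero fun i _ => Finset.sum_eq_zero fun j _ => ?_
  by_cases hij : i = j
  · subst hij
    rw [Pent_diag]
    by_cases hia : i = a
    · rw [hia, show f a = 2 from (hf a).mpr rfl, M11_two, zero_mul]
    · rw [if_neg, mul_zero]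
      intro h
      exact h a (Finset.mem_erase.mpr ⟨fun hc => hia hc.symm, Finset.mem_univ a⟩) ((hf a).mpr rfl)
  · rw [Pent_off f i j hij]
    by_cases hj2 : f j = 2
    · have hja : j = a := (hf j).mp hj2
      have hi2 : f i ≠ 2 := fun hc => hij (by rw [(hf i).mp hc, hja])
      rw [if_neg hi2, zero_mul, mul_zero]
    · rw [if_neg hj2, zero_mul]

lemma sum_Pent_three {n : ℕ} (f : Fin n → Fin 3) (a b c : Fin n)
    (hab : a ≠ b) (hac : a ≠ c) (hbc : b ≠ c)
    (hfa : f a = 2) (hfb : f b = 2) (hfc : f c = 2) :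
    ∑ i, ∑ j, Pent f i j = 0 := by
  refine Finset.sum_eq_zero fun i _ => Finset.sum_eq_zero fun j _ => ?_
  by_cases hij : i = j
  · subst hij
    rw [Pent_diag]
    by_cases hi2 : f i = 2
    · rw [show Mset (f i) 1 1 = 0 from by rw [hi2, M11_two], zero_mul]
    · have : ∃ l, f l = 2 ∧ l ≠ i := by
        by_cases ha : a = i
        · exact ⟨b, hfb, fun hc => hab (by rw [ha, hc])⟩
        · exact ⟨a, hfa, ha⟩
      obtain ⟨l, hl2, hli⟩ := this
      rw [if_neg (fun h => h l (Finset.mem_erase.mpr ⟨hli, Finset.mem_univ l⟩) hl2), mul_zero]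
  · rw [Pent_off f i j hij]
    have : ∃ l, f l = 2 ∧ l ≠ i ∧ l ≠ j := by
      by_cases ha : a ≠ i ∧ a ≠ j
      · exact ⟨a, hfa, ha⟩
      by_cases hb : b ≠ i ∧ b ≠ j
      · exact ⟨b, hfb, hb⟩
      by_cases hc : c ≠ i ∧ c ≠ j
      · exact ⟨c, hfc, hc⟩
      exfalso
      push_neg at ha hb hc
      by_cases hai : a = i
      · by_cases hbi : b = i
        · exact hab (hai.trans hbi.symm)
        · have hbj := hb hbi
          by_cases hci : c = i
          · exact hac (hai.trans hci.symm)
          · exact hbc ((hb hbi).trans (hc hci).symm)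
      · have haj := ha hai
        by_cases hbi : b = i
        · by_cases hci : c = i
          · exact hbc (hbi.trans hci.symm)
          · exact hac (haj.trans (hc hci).symm)
        · exact hab (haj.trans (hb hbi).symm)
    obtain ⟨l, hl2, hli, hlj⟩ := this
    have h3 : (if ∀ l ∈ (Finset.univ.erase j).erase i, f l ≠ 2 then (1:ℂ) else 0) = 0 :=
      if_neg (fun h => h l (by simp [hli, hlj]) hl2)
    rw [h3, mul_zero, mul_zero]

lemma sum_Pent_pair {n : ℕ} (f : Fin n → Fin 3) (a b : Fin n) (hab : a ≠ b)
    (hf : ∀ l, f l = 2 ↔ (l = a ∨ l = b)) :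
    ∑ i, ∑ j, Pent f i j = 2 := by
  have key : ∀ i j, Pent f i j =
      (if i = a ∧ j = b then 1 else 0) + (if i = b ∧ j = a then 1 else 0) := by
    intro i j
    by_cases hij : i = j
    · subst hij
      have rhs0 : (if i = a ∧ i = b then (1:ℂ) else 0) + (if i = b ∧ i = a then 1 else 0) = 0 := by
        rw [if_neg (fun h => hab (h.1.symm.trans h.2)), if_neg (fun h => hab (h.2.symm.trans h.1))]
        ring
      rw [rhs0, Pent_diag]
      by_cases hi2 : f i = 2
      · rw [show Mset (f i) 1 1 = 0 from by rw [hi2, M11_two], zero_mul]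
      · have hia : i ≠ a := fun hc => hi2 ((hf i).mpr (Or.inl hc))
        rw [if_neg (fun h => h a (Finset.mem_erase.mpr ⟨fun hc => hia hc.symm, Finset.mem_univ a⟩)
          ((hf a).mpr (Or.inl rfl))), mul_zero]
    · rw [Pent_off f i j hij]
      by_cases hi2 : f i = 2
      · by_cases hj2 : f j = 2
        · rcases (hf i).mp hi2 with hia | hib
          · have hjb : j = b := by
              rcases (hf j).mp hj2 with hja | hjb
              · exact absurd (hia.trans hja.symm) hij
              · exact hjb
            subst hia; subst hjb
            have hC : (if ∀ l ∈ (Finset.univ.erase j).erase i, f l ≠ 2 then (1:ℂ) else 0) = 1 := by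
              refine if_pos fun l hl hl2 => ?_
              simp only [Finset.mem_erase] at hl
              rcases (hf l).mp hl2 with rfl | rfl
              · exact hl.1 rfl
              · exact hl.2.1 rfl
            rw [hC, if_pos hj2, if_pos hi2]
            simp [hij]
          · have hja : j = a := by
              rcases (hf j).mp hj2 with hja | hjb
              · exact hja
              · exact absurd (hib.trans hjb.symm) hij
            subst hib; subst hja
            have hC : (if ∀ l ∈ (Finset.univ.erase j).erase i, f l ≠ 2 then (1:ℂ) else 0) = 1 := by
              refine if_pos fun l hl hl2 => ?_
              simp only [Finset.mem_erase] at hl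
              rcases (hf l).mp hl2 with rfl | rfl
              · exact hl.2.1 rfl
              · exact hl.1 rfl
            rw [hC, if_pos hj2, if_pos hi2]
            simp [hij]
        · have hja : j ≠ a := fun hc => hj2 ((hf j).mpr (Or.inl hc))
          have hjb : j ≠ b := fun hc => hj2 ((hf j).mpr (Or.inr hc))
          rw [if_neg hj2, zero_mul]
          rw [show (if i = a ∧ j = b then (1:ℂ) else 0) = 0 from if_neg (fun h => hjb h.2)]
          rw [show (if i = b ∧ j = a then (1:ℂ) else 0) = 0 from if_neg (fun h => hja h.2)]
          ring
      · have hia : i ≠ a := fun hc => hi2 ((hf i).mpr (Or.inl hc))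
        have hib : i ≠ b := fun hc => hi2 ((hf i).mpr (Or.inr hc))
        rw [if_neg hi2, zero_mul, mul_zero]
        rw [show (if i = a ∧ j = b then (1:ℂ) else 0) = 0 from if_neg (fun h => hia h.1)]
        rw [show (if i = b ∧ j = a then (1:ℂ) else 0) = 0 from if_neg (fun h => hib h.1)]
        ring
  simp_rw [key]
  rw [Finset.sum_congr rfl (fun i (_ : i ∈ Finset.univ) => Finset.sum_add_distrib)]
  rw [Finset.sum_add_distrib]
  have h1 : ∀ (u v : Fin n), (∑ i, ∑ j, if i = u ∧ j = v then (1:ℂ) else 0) = 1 := by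
    intro u v
    have : ∀ i : Fin n, (∑ j, if i = u ∧ j = v then (1:ℂ) else 0) = if i = u then 1 else 0 := by
      intro i
      by_cases hiu : i = u
      · simp [hiu, Finset.sum_ite_eq']
      · simp [hiu]
    simp_rw [this]
    simp [Finset.sum_ite_eq']
  rw [h1, h1]
  norm_num

lemma sum_pm {n r : ℕ} (h : r ≤ n) :
    ∑ k : Fin n, (if (k : ℕ) < r then (-1 : ℂ) else 1) = (n : ℂ) - 2 * r := by
  rw [Fin.sum_univ_eq_sum_range (fun k => if k < r then (-1 : ℂ) else 1) n]
  rw [Finset.range_eq_Ico, ← Finset.sum_Ico_consecutive _ (Nat.zero_le r) h]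
  rw [Finset.sum_congr rfl (fun k hk => if_pos (Finset.mem_Ico.mp hk).2),
    Finset.sum_congr rfl (g := fun _ => (1:ℂ)) (fun k hk => if_neg (by
      have := (Finset.mem_Ico.mp hk).1; omega))]
  simp [Nat.card_Ico]
  push_cast [Nat.cast_sub h]
  ring

end Aux

/-- For the state `ρ(n,p) = (1-p)|W_n⟩⟨W_n| + p|0…0⟩⟨0…0|` with all parties measuring
`Z` (setting 1) and `X` (setting 2), the symmetrized correlator `S^o_r`
(sum over all `n!` orderings, `o` parties measuring nontrivially, `r` of them using
setting 1) equals `(1-p)P^o_r + pQ^o_r` with `Q^o_r = n!δ_{o,r}` and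
`P^o_r = (n-1)!((n-2r)δ_{o,r} + 2δ_{o,r+2})`. -/
theorem stmt13 (n o r : ℕ) (ho1 : 1 ≤ o) (hon : o ≤ n) (hro : r ≤ o)
    (p : ℝ) (hp0 : 0 ≤ p) (hp1 : p ≤ 1) :
    ∑ σ : Equiv.Perm (Fin n),
        (((((1 - p : ℝ)) : ℂ) • outer (Wvec n) + ((p : ℝ) : ℂ) • outer (vac n)) *
          tensOp (fun l : Fin n =>
            Mset (if ((σ.symm l : Fin n) : ℕ) < r then 1
              else if ((σ.symm l : Fin n) : ℕ) < o then 2 else 0))).trace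
      = (((1 - p) * (((n - 1).factorial : ℝ) *
            (((n : ℝ) - 2 * r) * (if o = r then 1 else 0) +
              2 * (if o = r + 2 then 1 else 0)))
          + p * ((n.factorial : ℝ) * (if o = r then 1 else 0)) : ℝ) : ℂ) := by
  have hn : 1 ≤ n := le_trans ho1 hon
  have hrn : r ≤ n := le_trans hro hon
  set d1 : ℂ := if o = r then 1 else 0 with hd1
  set d2 : ℂ := if o = r + 2 then 1 else 0 with hd2
  have key : ∀ σ : Equiv.Perm (Fin n),
      (((((1 - p : ℝ)) : ℂ) • outer (Wvec n) + ((p : ℝ) : ℂ) • outer (vac n)) *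
          tensOp (fun l : Fin n =>
            Mset (if ((σ.symm l : Fin n) : ℕ) < r then 1
              else if ((σ.symm l : Fin n) : ℕ) < o then 2 else 0))).trace
      = (((1 - p : ℝ)) : ℂ) * ((n : ℂ)⁻¹ * (((n : ℂ) - 2 * r) * d1 + 2 * d2))
        + ((p : ℝ) : ℂ) * d1 := by
    intro σ
    set f : Fin n → Fin 3 := fun l =>
      if ((σ.symm l : Fin n) : ℕ) < r then 1
        else if ((σ.symm l : Fin n) : ℕ) < o then 2 else 0 with hfdef
    have hf2 : ∀ l, f l = 2 ↔ (r ≤ ((σ.symm l : Fin n) : ℕ) ∧ ((σ.symm l : Fin n) : ℕ) < o) := by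
      intro l
      simp only [hfdef]
      split_ifs with h1 h2 <;> simp <;> omega
    have hf1 : ∀ l, f l = 1 ↔ ((σ.symm l : Fin n) : ℕ) < r := by
      intro l
      simp only [hfdef]
      split_ifs with h1 h2 <;> simp <;> omega
    have hval : ∀ (v : ℕ) (hv : v < n) (l : Fin n),
        ((σ.symm l : Fin n) : ℕ) = v ↔ l = σ ⟨v, hv⟩ := by
      intro v hv l
      rw [← Equiv.symm_apply_eq]
      constructor
      · intro h; exact Fin.ext h
      · intro h; rw [h]
    rw [Matrix.add_mul, Matrix.smul_mul, Matrix.smul_mul, Matrix.trace_add,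
      Matrix.trace_smul, Matrix.trace_smul, smul_eq_mul, smul_eq_mul,
      trace_outer_W, trace_outer_vac]
    have hV : (∏ l, Mset (f l) 0 0) = d1 := by
      rw [prod_M00, hd1]
      by_cases ho : o = r
      · rw [if_pos (fun l _ h => by rw [hf2] at h; omega), if_pos ho]
      · rw [if_neg, if_neg ho]
        intro h
        have hr : r < n := lt_of_lt_of_le (lt_of_le_of_ne hro (fun hc => ho hc.symm)) hon
        refine h (σ ⟨r, hr⟩) (Finset.mem_univ _) ?_
        rw [hf2, Equiv.symm_apply_apply]
        exact ⟨le_refl r, lt_of_le_of_ne hro (fun hc => ho hc.symm)⟩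
    have hW : (∑ i, ∑ j, ∏ l, Mset (f l) (ebasis n j l) (ebasis n i l))
        = ((n : ℂ) - 2 * r) * d1 + 2 * d2 := by
      by_cases h1 : o = r
      · have hempty : ∀ l, f l ≠ 2 := fun l h => by rw [hf2] at h; omega
        rw [show (∑ i, ∑ j, ∏ l, Mset (f l) (ebasis n j l) (ebasis n i l))
          = ∑ i, ∑ j, Pent f i j from rfl, sum_Pent_empty f hempty]
        have := Equiv.sum_comp σ.symm (fun k : Fin n => if (k : ℕ) < r then (-1 : ℂ) else 1)
        rw [Finset.sum_congr rfl (fun i _ => by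
          rw [show (if f i = 1 then (-1:ℂ) else 1)
            = (if ((σ.symm i : Fin n) : ℕ) < r then (-1:ℂ) else 1) from by
              by_cases h : ((σ.symm i : Fin n) : ℕ) < r
              · rw [if_pos ((hf1 i).mpr h), if_pos h]
              · rw [if_neg (fun hc => h ((hf1 i).mp hc)), if_neg h]])]
        rw [this, sum_pm hrn, hd1, hd2, if_pos h1, if_neg (by omega)]
        ring
      · by_cases h2 : o = r + 1
        · have hr : r < n := by omega
          rw [show (∑ i, ∑ j, ∏ l, Mset (f l) (ebasis n j l) (ebasis n i l))
            = ∑ i, ∑ j, Pent f i j from rfl,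
            sum_Pent_single f (σ ⟨r, hr⟩) (fun l => by
              rw [hf2, ← hval r hr l]; omega)]
          rw [hd1, hd2, if_neg h1, if_neg (by omega)]
          ring
        · by_cases h3 : o = r + 2
          · have hr : r < n := by omega
            have hr1 : r + 1 < n := by omega
            have hne : σ ⟨r, hr⟩ ≠ σ ⟨r + 1, hr1⟩ :=
              fun hc => by have := σ.injective hc; simp [Fin.ext_iff] at this
            rw [show (∑ i, ∑ j, ∏ l, Mset (f l) (ebasis n j l) (ebasis n i l))
              = ∑ i, ∑ j, Pent f i j from rfl,
              sum_Pent_pair f (σ ⟨r, hr⟩) (σ ⟨r + 1, hr1⟩) hne (fun l => by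
                rw [hf2, ← hval r hr l, ← hval (r+1) hr1 l]; omega)]
            rw [hd1, hd2, if_neg h1, if_pos h3]
            ring
          · have ho3 : r + 3 ≤ o := by omega
            have hr : r < n := by omega
            have hr1 : r + 1 < n := by omega
            have hr2 : r + 2 < n := by omega
            have e01 : σ ⟨r, hr⟩ ≠ σ ⟨r+1, hr1⟩ :=
              fun hc => by have := σ.injective hc; simp [Fin.ext_iff] at this
            have e02 : σ ⟨r, hr⟩ ≠ σ ⟨r+2, hr2⟩ :=
              fun hc => by have := σ.injective hc; simp [Fin.ext_iff] at this
            have e12 : σ ⟨r+1, hr1⟩ ≠ σ ⟨r+2, hr2⟩ :=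
              fun hc => by have := σ.injective hc; simp [Fin.ext_iff] at this
            rw [show (∑ i, ∑ j, ∏ l, Mset (f l) (ebasis n j l) (ebasis n i l))
              = ∑ i, ∑ j, Pent f i j from rfl,
              sum_Pent_three f _ _ _ e01 e02 e12
                (by rw [hf2, Equiv.symm_apply_apply]; constructor <;> simp <;> omega)
                (by rw [hf2, Equiv.symm_apply_apply]; constructor <;> simp <;> omega)
                (by rw [hf2, Equiv.symm_apply_apply]; constructor <;> simp <;> omega)]
            rw [hd1, hd2, if_neg h1, if_neg h3]
            ring
    rw [hV, hW]
  rw [Finset.sum_congr rfl (fun σ _ => key σ), Finset.sum_const, Finset.card_univ,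
    Fintype.card_perm, Fintype.card_fin, nsmul_eq_mul]
  have hfact : (n.factorial : ℂ) * (n : ℂ)⁻¹ = ((n - 1).factorial : ℂ) := by
    have hne : (n : ℂ) ≠ 0 := Nat.cast_ne_zero.mpr (by omega)
    have : n * (n - 1).factorial = n.factorial := Nat.mul_factorial_pred (by omega)
    field_simp
    rw [← this]
    push_cast
    ring
  have expand : (n.factorial : ℂ) *
      ((((1 - p : ℝ)) : ℂ) * ((n : ℂ)⁻¹ * (((n : ℂ) - 2 * r) * d1 + 2 * d2))
        + ((p : ℝ) : ℂ) * d1)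
      = (((1 - p : ℝ)) : ℂ) * (((n.factorial : ℂ) * (n : ℂ)⁻¹) * (((n : ℂ) - 2 * r) * d1 + 2 * d2))
        + ((p : ℝ) : ℂ) * ((n.factorial : ℂ) * d1) := by ring
  rw [expand, hfact]
  rw [hd1, hd2]
  push_cast
  split_ifs <;> push_cast <;> ring
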